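/- Let m be a nonnegative integer. Then Σ_{j=0}^{m} (-1)^{m-j} [m choose j]_q · q^{binom(j,2)} · (q;q)_{m-j} / (x;q)_{m-j+1} = q^{binom(m+1,2)} / (1 - x q^m), as an identity of rational functions in q and x. -/

import Mathlib

open Finset Polynomial

noncomputable def qP {K : Type*} [Field K] (a q : K) (n : ℕ) : K :=
  ∏ i ∈ Finset.range n, (1 - a * q ^ i)

noncomputable def qBin {K : Type*} [Field K] (q : K) (n k : ℕ) : K :=
  if k ≤ n then qP (q ^ (n - k + 1)) q k / qP q q k else 0

/-- The field of rational functions in two variables `q2`, `x2` over `ℚ`. -/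
noncomputable def q2 : RatFunc (RatFunc ℚ) := RatFunc.C RatFunc.X
noncomputable def x2 : RatFunc (RatFunc ℚ) := RatFunc.X

lemma qP_zero {K : Type*} [Field K] (a q : K) : qP a q 0 = 1 := by simp [qP]
lemma qP_succ {K : Type*} [Field K] (a q : K) (n : ℕ) :
    qP a q (n+1) = qP a q n * (1 - a * q ^ n) := Finset.prod_range_succ _ _
lemma qP_succ' {K : Type*} [Field K] (a q : K) (n : ℕ) :
    qP a q (n+1) = (1 - a) * qP (a*q) q n := by
  rw [qP, Finset.prod_range_succ']
  simp only [pow_zero, mul_one, pow_succ']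
  rw [mul_comm, qP]
  congr 1
  exact Finset.prod_congr rfl fun i _ => by ring
lemma qP_ne_zero {K : Type*} [Field K] {a q : K} (n : ℕ)
    (h : ∀ i : ℕ, (1:K) - a * q ^ i ≠ 0) : qP a q n ≠ 0 :=
  Finset.prod_ne_zero_iff.2 fun i _ => h i
lemma qP_q_ne_zero {K : Type*} [Field K] {q : K}
    (hq : ∀ k : ℕ, 1 ≤ k → (1:K) - q ^ k ≠ 0) (n : ℕ) : qP q q n ≠ 0 :=
  qP_ne_zero n fun i => by simpa [pow_succ'] using hq (i+1) (by omega)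
lemma qBin_pascal {K : Type*} [Field K] {q : K}
    (hq : ∀ k : ℕ, 1 ≤ k → (1:K) - q ^ k ≠ 0) (m j : ℕ) (hj : j ≤ m) :
    qBin q (m+1) (j+1) = qBin q m j + q^(j+1) * qBin q m (j+1) := by
  have hPj := qP_q_ne_zero hq j
  have hPj1 := qP_q_ne_zero hq (j+1)
  rcases eq_or_lt_of_le hj with rfl | hlt
  · have h1 : qBin q (j+1) (j+1) = 1 := by
      simp only [qBin, if_pos (le_refl (j+1))]
      rw [Nat.sub_self, zero_add, pow_one, div_self hPj1]
    have h2 : qBin q j j = 1 := by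
      simp only [qBin, if_pos (le_refl j)]
      rw [Nat.sub_self, zero_add, pow_one, div_self hPj]
    have h3 : qBin q j (j+1) = 0 := by
      simp only [qBin, if_neg (by omega : ¬ j + 1 ≤ j)]
    rw [h1, h2, h3]; ring
  · have hj1 : j + 1 ≤ m := hlt
    simp only [qBin, if_pos (by omega : j + 1 ≤ m + 1), if_pos hj, if_pos hj1]
    have e1 : m + 1 - (j+1) + 1 = m - j + 1 := by omega
    have e2 : m - (j+1) + 1 = m - j := by omega
    rw [e1, e2]
    have ha : qP (q ^ (m - j + 1)) q (j+1)
        = qP (q ^ (m - j + 1)) q j * (1 - q ^ (m+1)) := by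
      rw [qP_succ, ← pow_add]
      congr 3
      omega
    have hb : qP (q ^ (m - j)) q (j+1) = (1 - q ^ (m - j)) * qP (q ^ (m - j + 1)) q j := by
      rw [qP_succ', ← pow_succ]
    have hc : qP q q (j+1) = qP q q j * (1 - q ^ (j+1)) := by
      rw [qP_succ, ← pow_succ']
    rw [ha, hb, hc]
    have h1 : (1:K) - q ^ (j+1) ≠ 0 := hq (j+1) (by omega)
    have key : q ^ (j+1) * q ^ (m - j) = q ^ (m+1) := by
      rw [← pow_add]; congr 1; omega
    set A := qP (q ^ (m - j + 1)) q j with hA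
    set P := qP q q j with hP
    field_simp
    linear_combination A * key
lemma combine {K : Type*} [Field K] {q x : K} (hx : ∀ k : ℕ, (1:K) - x * q ^ k ≠ 0)
    (E : K) (n j : ℕ) :
    E * q ^ j * qP q q n / qP x q (n+1) + (- E) * q ^ j * qP q q (n+1) / qP x q (n+2)
      = q ^ (j + n + 1) * (E * qP q q n / qP (x*q) q (n+1)) := by
  have hx' : ∀ k : ℕ, (1:K) - (x*q) * q ^ k ≠ 0 := fun k => by
    have := hx (k+1); rw [pow_succ'] at this
    simpa [mul_assoc] using this
  have h1x : (1:K) - x ≠ 0 := by simpa using hx 0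
  have hd : qP (x*q) q n ≠ 0 := qP_ne_zero n hx'
  have hu : (1:K) - x * q * q ^ n ≠ 0 := hx' n
  have hpow : q ^ (j + n + 1) = q ^ j * q ^ n * q := by
    rw [pow_add, pow_add, pow_one]
  rw [show n + 2 = (n+1) + 1 from rfl, qP_succ' x q (n+1), qP_succ' x q n,
    qP_succ (x*q) q n, qP_succ q q n, hpow]
  field_simp
  ring
lemma tri (j : ℕ) : (j+1) * ((j+1) - 1) / 2 = j*(j-1)/2 + j := by
  obtain ⟨a, ha⟩ := Nat.even_mul_pred_self j
  obtain ⟨b, hb⟩ := Nat.even_mul_pred_self (j+1)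
  have h4 : (j+1)*((j+1)-1) = j*(j-1) + 2*j := by
    cases j with
    | zero => simp
    | succ k => simp only [Nat.add_sub_cancel]; ring
  omega
lemma tri' (m : ℕ) : (m+1) + m*(m+1)/2 = (m+1)*(m+1+1)/2 := by
  obtain ⟨a, ha⟩ := Nat.even_mul_succ_self m
  obtain ⟨b, hb⟩ := Nat.even_mul_succ_self (m+1)
  have h4 : (m+1)*(m+1+1) = m*(m+1) + 2*(m+1) := by ring
  omega

theorem aux {K : Type*} [Field K] {q : K} (hq : ∀ k : ℕ, 1 ≤ k → (1:K) - q ^ k ≠ 0) :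
    ∀ (m : ℕ) (x : K), (∀ k : ℕ, (1:K) - x * q ^ k ≠ 0) →
      ∑ j ∈ Finset.range (m + 1),
          (-1:K) ^ (m - j) * qBin q m j * q ^ (j * (j - 1) / 2) * qP q q (m - j) /
            qP x q (m - j + 1) =
        q ^ (m * (m + 1) / 2) / (1 - x * q ^ m) := by
  intro m
  induction m with
  | zero =>
    intro x hx
    simp [qBin, qP]
  | succ m ih =>
    intro x hx
    have hx' : ∀ k : ℕ, (1:K) - (x*q) * q ^ k ≠ 0 := fun k => by
      have := hx (k+1); rw [pow_succ'] at this
      simpa [mul_assoc] using this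
    have hBzero : qBin q m (m+1) = 0 := by
      simp only [qBin, if_neg (by omega : ¬ m + 1 ≤ m)]
    calc
      ∑ j ∈ Finset.range (m + 1 + 1),
          (-1:K) ^ (m + 1 - j) * qBin q (m+1) j * q ^ (j * (j - 1) / 2) * qP q q (m + 1 - j) /
            qP x q (m + 1 - j + 1)
        = ∑ j ∈ Finset.range (m + 1),
            ((-1:K) ^ (m - j) * qBin q m j * (q ^ (j * (j - 1) / 2) * q ^ j) * qP q q (m - j) /
              qP x q (m - j + 1)
            + (-1:K) ^ (m + 1 - (j+1)) * q ^ (j+1) * qBin q m (j+1) * q ^ ((j+1) * ((j+1) - 1) / 2)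
              * qP q q (m + 1 - (j+1)) / qP x q (m + 1 - (j+1) + 1))
          + (-1:K) ^ (m + 1 - 0) * q ^ 0 * qBin q m 0 * q ^ (0 * (0 - 1) / 2)
              * qP q q (m + 1 - 0) / qP x q (m + 1 - 0 + 1) := by
          rw [Finset.sum_range_succ']
          congr 1
          · refine Finset.sum_congr rfl fun j hj => ?_
            rw [Finset.mem_range] at hj
            have hjm : j ≤ m := by omega
            rw [qBin_pascal hq m j hjm]
            have e1 : m + 1 - (j+1) = m - j := by omega
            have e2 : (j+1) * ((j+1) - 1) / 2 = j*(j-1)/2 + j := tri j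
            rw [e1, e2, pow_add]
            ring
          · simp [qBin, qP_zero]
      _ = ∑ j ∈ Finset.range (m + 1),
            (-1:K) ^ (m - j) * qBin q m j * (q ^ (j * (j - 1) / 2) * q ^ j) * qP q q (m - j) /
              qP x q (m - j + 1)
          + ∑ j ∈ Finset.range (m + 1 + 1),
            (-1:K) ^ (m + 1 - j) * q ^ j * qBin q m j * q ^ (j * (j - 1) / 2)
              * qP q q (m + 1 - j) / qP x q (m + 1 - j + 1) := by
          rw [Finset.sum_add_distrib, Finset.sum_range_succ' (fun j =>
            (-1:K) ^ (m + 1 - j) * q ^ j * qBin q m j * q ^ (j * (j - 1) / 2)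
              * qP q q (m + 1 - j) / qP x q (m + 1 - j + 1)) (m+1)]
          ring
      _ = ∑ j ∈ Finset.range (m + 1),
            ((-1:K) ^ (m - j) * qBin q m j * (q ^ (j * (j - 1) / 2) * q ^ j) * qP q q (m - j) /
              qP x q (m - j + 1)
            + (-1:K) ^ (m + 1 - j) * q ^ j * qBin q m j * q ^ (j * (j - 1) / 2)
              * qP q q (m + 1 - j) / qP x q (m + 1 - j + 1)) := by
          rw [Finset.sum_range_succ (fun j =>
            (-1:K) ^ (m + 1 - j) * q ^ j * qBin q m j * q ^ (j * (j - 1) / 2)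
              * qP q q (m + 1 - j) / qP x q (m + 1 - j + 1)) (m+1), hBzero,
            Finset.sum_add_distrib]
          ring
      _ = ∑ j ∈ Finset.range (m + 1),
            q ^ (m + 1) * ((-1:K) ^ (m - j) * qBin q m j * q ^ (j * (j - 1) / 2) * qP q q (m - j)
              / qP (x*q) q (m - j + 1)) := by
          refine Finset.sum_congr rfl fun j hj => ?_
          rw [Finset.mem_range] at hj
          have hjm : j ≤ m := by omega
          have e1 : m + 1 - j = (m - j) + 1 := by omega
          have := combine hx ((-1:K) ^ (m - j) * qBin q m j * q ^ (j * (j - 1) / 2)) (m - j) j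
          have e3 : j + (m - j) + 1 = m + 1 := by omega
          rw [e1]
          rw [e3, show m - j + 2 = m - j + 1 + 1 by omega] at this
          calc (-1:K) ^ (m - j) * qBin q m j * (q ^ (j * (j - 1) / 2) * q ^ j) * qP q q (m - j) /
              qP x q (m - j + 1)
            + (-1:K) ^ (m - j + 1) * q ^ j * qBin q m j * q ^ (j * (j - 1) / 2)
              * qP q q (m - j + 1) / qP x q (m - j + 1 + 1)
              = ((-1:K) ^ (m - j) * qBin q m j * q ^ (j * (j - 1) / 2)) * q ^ j * qP q q (m - j) /
                  qP x q (m - j + 1)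
                + (- ((-1:K) ^ (m - j) * qBin q m j * q ^ (j * (j - 1) / 2))) * q ^ j
                  * qP q q (m - j + 1) / qP x q (m - j + 1 + 1) := by
                rw [pow_succ]
                ring
            _ = q ^ (m + 1) * ((-1:K) ^ (m - j) * qBin q m j * q ^ (j * (j - 1) / 2)
                  * qP q q (m - j) / qP (x*q) q (m - j + 1)) := by rw [this]
      _ = q ^ (m + 1) * (q ^ (m * (m + 1) / 2) / (1 - (x*q) * q ^ m)) := by
          rw [← Finset.mul_sum, ih (x*q) hx']
      _ = q ^ ((m+1) * (m + 1 + 1) / 2) / (1 - x * q ^ (m+1)) := by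
          rw [show (x*q)*q^m = x*q^(m+1) by rw [pow_succ]; ring, ← tri' m,
            pow_add q (m+1) (m*(m+1)/2), mul_div_assoc]

lemma hq2 : ∀ k : ℕ, 1 ≤ k → (1 : RatFunc (RatFunc ℚ)) - q2 ^ k ≠ 0 := by
  intro k hk h
  rw [sub_eq_zero] at h
  have : (RatFunc.X : RatFunc ℚ) ^ k = 1 := by
    apply RatFunc.C.injective
    simpa [q2, map_pow] using h.symm
  have h2 : (Polynomial.X : ℚ[X]) ^ k = 1 := by
    apply RatFunc.algebraMap_injective ℚ
    simpa [map_pow, RatFunc.algebraMap_X] using this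
  have := congrArg Polynomial.natDegree h2
  simp [Polynomial.natDegree_X_pow] at this
  omega

lemma hx2 : ∀ k : ℕ, (1 : RatFunc (RatFunc ℚ)) - x2 * q2 ^ k ≠ 0 := by
  intro k h
  rw [sub_eq_zero] at h
  have : (1 : RatFunc (RatFunc ℚ)) = algebraMap (Polynomial (RatFunc ℚ)) _
      (Polynomial.X * Polynomial.C (RatFunc.X ^ k)) := by
    rw [h]; simp [x2, q2, map_pow, RatFunc.algebraMap_X, RatFunc.algebraMap_C]
  rw [show (1 : RatFunc (RatFunc ℚ)) = algebraMap (Polynomial (RatFunc ℚ)) _ 1 from (map_one _).symm] at this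
  have h2 := RatFunc.algebraMap_injective (RatFunc ℚ) this
  have := congrArg (Polynomial.coeff · 0) h2
  simp at this

theorem stmt_7 (m : ℕ) :
    ∑ j ∈ Finset.range (m + 1),
        (-1) ^ (m - j) * qBin q2 m j * q2 ^ (j * (j - 1) / 2) * qP q2 q2 (m - j) /
          qP x2 q2 (m - j + 1) =
      q2 ^ (m * (m + 1) / 2) / (1 - x2 * q2 ^ m) := by
  exact aux hq2 m x2 hx2
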